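/- arXiv:1402.6763 — 2 statements merged into one kernel-verified Lean document; each statement's English description precedes it below -/
import Mathlib

section
/- Let u ∈ R^{XA} satisfy Σ u(x,a) = 1, Σ_{(x,a): u(x,a)<0} |u(x,a)| ≤ ε', and ||u^T(P−B)||_1 ≤ ε''. Let h = [u]_+/||[u]_+||_1. Then ||h^T(B−P)||_1 ≤ 2ε' + ε''. -/
open Finset

/-- if `u` sums to 1, has negative mass at most `ε'`, and
`‖uᵀ(P−B)‖₁ ≤ ε''`, then `h = [u]₊/‖[u]₊‖₁` satisfies
`‖hᵀ(B−P)‖₁ ≤ 2ε' + ε''`. -/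
theorem stmt_1 (X A : ℕ)
    (P : Matrix (Fin X × Fin A) (Fin X) ℝ)
    (hPnonneg : ∀ r x', 0 ≤ P r x') (hProw : ∀ r, ∑ x', P r x' = 1)
    (B : Matrix (Fin X × Fin A) (Fin X) ℝ)
    (hB : ∀ r x', B r x' = if r.1 = x' then 1 else 0)
    (u : Fin X × Fin A → ℝ) (ε' ε'' : ℝ) (hε' : 0 ≤ ε') (hε'' : 0 ≤ ε'')
    (hsum : ∑ r, u r = 1)
    (hneg : ∑ r ∈ Finset.univ.filter (fun r => u r < 0), |u r| ≤ ε')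
    (hstat : ∑ x', |∑ r, u r * (P r x' - B r x')| ≤ ε'')
    (h : Fin X × Fin A → ℝ)
    (hdef : ∀ r, h r = max (u r) 0 / (∑ r', |max (u r') 0|)) :
    ∑ x', |∑ r, h r * (B r x' - P r x')| ≤ 2 * ε' + ε'' := by
  set S := ∑ r', |max (u r') 0| with hSdef
  set N := ∑ r, max (-(u r)) 0 with hNdef
  have hNnonneg : 0 ≤ N := Finset.sum_nonneg fun r _ => le_max_right _ _
  have hNle : N ≤ ε' := by
    refine le_trans (le_of_eq ?_) hneg
    rw [hNdef, ← Finset.sum_filter_add_sum_filter_not Finset.univ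
      (fun r => u r < 0) (fun r => max (-(u r)) 0)]
    have h1 : ∑ r ∈ Finset.univ.filter (fun r => u r < 0), max (-(u r)) 0
        = ∑ r ∈ Finset.univ.filter (fun r => u r < 0), |u r| := by
      refine Finset.sum_congr rfl fun r hr => ?_
      simp only [Finset.mem_filter] at hr
      rw [max_eq_left (by linarith [hr.2]), abs_of_neg hr.2]
    have h2 : ∑ r ∈ Finset.univ.filter (fun r => ¬ u r < 0), max (-(u r)) 0 = 0 := by
      refine Finset.sum_eq_zero fun r hr => ?_
      simp only [Finset.mem_filter, not_lt] at hr
      exact max_eq_right (by linarith [hr.2])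
    rw [h1, h2, add_zero]
  have hSeq : S = 1 + N := by
    rw [hSdef, hNdef, ← hsum, ← Finset.sum_add_distrib]
    refine Finset.sum_congr rfl fun r _ => ?_
    rw [abs_of_nonneg (le_max_right _ _)]
    rcases le_or_gt (u r) 0 with hle | hlt
    · rw [max_eq_right hle, max_eq_left (by linarith)]; ring
    · rw [max_eq_left hlt.le, max_eq_right (by linarith)]; ring
  have hS1 : (1:ℝ) ≤ S := by rw [hSeq]; linarith
  have hSpos : (0:ℝ) < S := lt_of_lt_of_le one_pos hS1
  -- rewrite the goal sum
  have hrw : ∀ x', |∑ r, h r * (B r x' - P r x')|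
      = |∑ r, max (u r) 0 * (B r x' - P r x')| / S := by
    intro x'
    rw [← abs_of_pos hSpos, ← abs_div, Finset.sum_div]
    congr 1
    refine Finset.sum_congr rfl fun r _ => ?_
    rw [hdef r]; field_simp
  have hkey : ∀ x', |∑ r, max (u r) 0 * (B r x' - P r x')|
      ≤ |∑ r, u r * (P r x' - B r x')| + ∑ r, max (-(u r)) 0 * (B r x' + P r x') := by
    intro x'
    have hsplit : ∑ r, max (u r) 0 * (B r x' - P r x')
        = (∑ r, u r * (B r x' - P r x')) + ∑ r, max (-(u r)) 0 * (B r x' - P r x') := by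
      rw [← Finset.sum_add_distrib]
      refine Finset.sum_congr rfl fun r _ => ?_
      rcases le_or_gt (u r) 0 with hle | hlt
      · rw [max_eq_right hle, max_eq_left (by linarith)]; ring
      · rw [max_eq_left hlt.le, max_eq_right (by linarith)]; ring
    rw [hsplit]
    have h1 : |∑ r, u r * (B r x' - P r x')| = |∑ r, u r * (P r x' - B r x')| := by
      rw [← abs_neg, ← Finset.sum_neg_distrib]
      congr 1; refine Finset.sum_congr rfl fun r _ => by ring
    calc |(∑ r, u r * (B r x' - P r x')) + ∑ r, max (-(u r)) 0 * (B r x' - P r x')|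
        ≤ |∑ r, u r * (B r x' - P r x')| + |∑ r, max (-(u r)) 0 * (B r x' - P r x')| :=
          abs_add_le _ _
      _ ≤ |∑ r, u r * (P r x' - B r x')| + ∑ r, max (-(u r)) 0 * (B r x' + P r x') := by
          rw [h1]
          gcongr
          refine le_trans (Finset.abs_sum_le_sum_abs _ _) (Finset.sum_le_sum fun r _ => ?_)
          rw [abs_mul, abs_of_nonneg (le_max_right _ _)]
          refine mul_le_mul_of_nonneg_left ?_ (le_max_right _ _)
          have hBnn : (0:ℝ) ≤ B r x' := by rw [hB]; positivity
          have := hPnonneg r x'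
          calc |B r x' - P r x'| ≤ |B r x'| + |P r x'| := abs_sub _ _
            _ = B r x' + P r x' := by rw [abs_of_nonneg hBnn, abs_of_nonneg this]
  have hsum2 : ∑ x', ∑ r, max (-(u r)) 0 * (B r x' + P r x') = 2 * N := by
    rw [Finset.sum_comm, hNdef, Finset.mul_sum]
    refine Finset.sum_congr rfl fun r _ => ?_
    rw [← Finset.mul_sum, Finset.sum_add_distrib, hProw]
    have : ∑ x', B r x' = 1 := by
      simp only [hB]
      rw [Finset.sum_ite_eq]
      simp
    rw [this]; ring
  calc ∑ x', |∑ r, h r * (B r x' - P r x')|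
      = (∑ x', |∑ r, max (u r) 0 * (B r x' - P r x')|) / S := by
        rw [Finset.sum_div]; exact Finset.sum_congr rfl fun x' _ => hrw x'
    _ ≤ (ε'' + 2 * N) / S := by
        apply div_le_div_of_nonneg_right ?_ hSpos.le |>.trans_eq rfl
        calc ∑ x', |∑ r, max (u r) 0 * (B r x' - P r x')|
            ≤ ∑ x', (|∑ r, u r * (P r x' - B r x')| + ∑ r, max (-(u r)) 0 * (B r x' + P r x')) :=
              Finset.sum_le_sum fun x' _ => hkey x'
          _ = (∑ x', |∑ r, u r * (P r x' - B r x')|)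
              + ∑ x', ∑ r, max (-(u r)) 0 * (B r x' + P r x') := Finset.sum_add_distrib
          _ ≤ ε'' + 2 * N := by rw [hsum2]; linarith
    _ ≤ ε'' + 2 * N := by
        rw [div_le_iff₀ hSpos]
        nlinarith
    _ ≤ 2 * ε' + ε'' := by linarith
end

section
/- Suppose h ∈ Δ_{XA} is a probability distribution over state-action pairs satisfying ||h^T(B−P)||_1 ≤ c, and let ν_k denote the state-action distribution obtained by running the policy induced by h for k steps starting from initial distribution h (i.e., ν_0 = h and ν_{k+1}^T = ν_k^T P M^h where M^h is the policy matrix of h). Then ||ν_k − h||_1 ≤ k·c for all k ≥ 0. -/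
open Finset

lemma contract_aux {α β : Type*} [Fintype α] [Fintype β]
    (Q : α → β → ℝ) (hQ : ∀ i j, 0 ≤ Q i j) (hrow : ∀ i, ∑ j, Q i j = 1)
    (v : α → ℝ) : ∑ j, |∑ i, v i * Q i j| ≤ ∑ i, |v i| := by
  calc ∑ j, |∑ i, v i * Q i j| ≤ ∑ j, ∑ i, |v i| * Q i j := by
        apply Finset.sum_le_sum; intro j _
        calc |∑ i, v i * Q i j| ≤ ∑ i, |v i * Q i j| := Finset.abs_sum_le_sum_abs _ _
          _ = ∑ i, |v i| * Q i j := by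
            apply Finset.sum_congr rfl; intro i _
            rw [abs_mul, abs_of_nonneg (hQ i j)]
    _ = ∑ i, |v i| * ∑ j, Q i j := by
        rw [Finset.sum_comm]; simp [Finset.mul_sum]
    _ = ∑ i, |v i| := by simp [hrow]

/-- if `h` is a state-action distribution with
`‖hᵀ(B−P)‖₁ ≤ c`, and `ν_k` is the state-action distribution after running
the policy induced by `h` for `k` steps from `ν₀ = h`
(i.e. `ν_{k+1}ᵀ = ν_kᵀ P M^h`), then `‖ν_k − h‖₁ ≤ k·c`. -/
theorem stmt_2 (X A : ℕ)
    (P : Matrix (Fin X × Fin A) (Fin X) ℝ)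
    (hPnonneg : ∀ r x', 0 ≤ P r x') (hProw : ∀ r, ∑ x', P r x' = 1)
    (B : Matrix (Fin X × Fin A) (Fin X) ℝ)
    (hB : ∀ r x', B r x' = if r.1 = x' then 1 else 0)
    (h : Fin X × Fin A → ℝ)
    (hhnonneg : ∀ r, 0 ≤ h r) (hhsum : ∑ r, h r = 1)
    (hmarg : ∀ x : Fin X, 0 < ∑ a, h (x, a))
    (M : Matrix (Fin X) (Fin X × Fin A) ℝ)
    (hM : ∀ x r, M x r = if r.1 = x then h r / (∑ a, h (x, a)) else 0)
    (c : ℝ)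
    (hstat : ∑ x', |∑ r, h r * (B r x' - P r x')| ≤ c)
    (ν : ℕ → Fin X × Fin A → ℝ)
    (hν0 : ν 0 = h)
    (hrec : ∀ k, ν (k + 1) = fun r' => ∑ x, (∑ r, ν k r * P r x) * M x r')
    (k : ℕ) :
    ∑ r, |ν k r - h r| ≤ k * c := by
  have hMnonneg : ∀ x r, 0 ≤ M x r := by
    intro x r; rw [hM]
    split
    · exact div_nonneg (hhnonneg r) (hmarg x).le
    · exact le_refl 0
  have hMrow : ∀ x, ∑ r, M x r = 1 := by
    intro x
    rw [Fintype.sum_prod_type]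
    have hy : ∀ y, (∑ a, M x (y, a)) = if y = x then 1 else 0 := by
      intro y
      by_cases hyx : y = x
      · subst hyx
        simp only [hM, if_pos rfl, if_true]
        rw [← Finset.sum_div, div_self (hmarg y).ne']
      · simp [hM, hyx]
    simp [hy]
  have hBM : ∀ r' : Fin X × Fin A, ∑ x, (∑ r, h r * B r x) * M x r' = h r' := by
    intro r'
    have h1 : ∀ x, (∑ r, h r * B r x) = ∑ a, h (x, a) := by
      intro x
      rw [Fintype.sum_prod_type]
      simp [hB, mul_ite]
    simp only [h1, hM]
    rw [Finset.sum_congr rfl (fun x _ => by rw [mul_ite, mul_zero])]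
    rw [Finset.sum_ite_eq]
    simp [mul_div_cancel₀ _ (hmarg r'.1).ne']
  induction k with
  | zero => simp [hν0]
  | succ k ih =>
    set d : Fin X × Fin A → ℝ := fun r => ν k r - h r with hd
    have key : ∀ r', ν (k+1) r' - h r' =
        (∑ x, (∑ r, d r * P r x) * M x r') +
        (∑ x, (∑ r, h r * (P r x - B r x)) * M x r') := by
      intro r'
      simp only [hrec]
      conv_lhs => rw [← hBM r']
      rw [← Finset.sum_sub_distrib, ← Finset.sum_add_distrib]
      apply Finset.sum_congr rfl
      intro x _
      rw [← sub_mul, ← add_mul]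
      congr 1
      rw [← Finset.sum_sub_distrib, ← Finset.sum_add_distrib]
      apply Finset.sum_congr rfl
      intro r _
      simp only [hd]
      ring
    have h2 : ∑ x, |∑ r, h r * (P r x - B r x)| ≤ c := by
      calc ∑ x, |∑ r, h r * (P r x - B r x)|
          = ∑ x, |∑ r, h r * (B r x - P r x)| := by
            apply Finset.sum_congr rfl; intro x _
            rw [← abs_neg, ← Finset.sum_neg_distrib]
            congr 1; apply Finset.sum_congr rfl; intro r _; ring
        _ ≤ c := hstat
    calc ∑ r', |ν (k+1) r' - h r'|
        ≤ ∑ r', (|∑ x, (∑ r, d r * P r x) * M x r'| +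
            |∑ x, (∑ r, h r * (P r x - B r x)) * M x r'|) := by
          apply Finset.sum_le_sum; intro r' _
          rw [key r']; exact abs_add_le _ _
      _ = (∑ r', |∑ x, (∑ r, d r * P r x) * M x r'|) +
          ∑ r', |∑ x, (∑ r, h r * (P r x - B r x)) * M x r'| :=
            Finset.sum_add_distrib
      _ ≤ (∑ x, |∑ r, d r * P r x|) + ∑ x, |∑ r, h r * (P r x - B r x)| :=
          add_le_add (contract_aux M hMnonneg hMrow _) (contract_aux M hMnonneg hMrow _)
      _ ≤ (∑ r, |d r|) + c :=
          add_le_add (contract_aux P hPnonneg hProw d) h2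
      _ ≤ k * c + c := add_le_add ih le_rfl
      _ = (↑(k+1)) * c := by push_cast; ring
end
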